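/- Let M be a finite set and let p₁, …, p_n be a sample of partial orders on M such that the empirical ufg depth D_n is not identically zero. Let p_Δ = {(y, y) | y ∈ M} be the trivial partial order. Then D_n(p_Δ) = 0 if and only if there exists a pair (y₁, y₂) with y₁ ≠ y₂ such that (y₁, y₂) ∈ p_i for all i = 1, …, n. -/

import Mathlib

open scoped Classical

variable {M : Type*}

/-- `p ⊆ M × M` is a partial order: reflexive, antisymmetric, transitive. -/
def IsPO (p : Set (M × M)) : Prop :=
  (∀ x : M, (x, x) ∈ p) ∧ (∀ x y : M, (x, y) ∈ p → (y, x) ∈ p → x = y) ∧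
  (∀ x y z : M, (x, y) ∈ p → (y, z) ∈ p → (x, z) ∈ p)

/-- The set 𝒫 of all partial orders on `M`. -/
def Posets (M : Type*) : Set (Set (M × M)) := {p | IsPO p}

/-- The closure operator γ(P) = {p ∈ 𝒫 | ⋂P ⊆ p ⊆ ⋃P}. -/
def gam (P : Set (Set (M × M))) : Set (Set (M × M)) :=
  {q | q ∈ Posets M ∧ (⋂ p ∈ P, p) ⊆ q ∧ q ⊆ ⋃ p ∈ P, p}

/-- `S` is union-free generic: (C1) `S ⊊ γ(S)` and (C2) no family of proper
subsets of `S` has closures whose union is `γ(S)`. -/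
def IsUfg (S : Set (Set (M × M))) : Prop :=
  S ⊆ Posets M ∧ S ⊂ gam S ∧
    ¬ ∃ (ℓ : ℕ) (A : Fin ℓ → Set (Set (M × M))),
        (∀ i, A i ⊂ S) ∧ (⋃ i, gam (A i)) = gam S

def Diag (M : Type*) : Set (M × M) := {z : M × M | z.1 = z.2}

lemma diag_isPO : IsPO (Diag M) := by
  refine ⟨fun x => rfl, fun x y hxy _ => hxy, fun x y z hxy hyz => hxy.trans hyz⟩

lemma diag_subset {p : Set (M × M)} (hp : IsPO p) : Diag M ⊆ p := by
  rintro ⟨x, y⟩ (h : x = y); subst h; exact hp.1 x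

lemma gam_empty [Nonempty M] : gam (∅ : Set (Set (M × M))) = ∅ := by
  ext q
  simp only [gam, Set.mem_setOf_eq, Set.mem_empty_iff_false, iff_false, not_and]
  intro hq _
  intro hsub
  obtain ⟨x⟩ := ‹Nonempty M›
  have := hsub (hq.1 x)
  simpa using this

lemma gam_singleton (p : Set (M × M)) : gam {p} ⊆ {p} := by
  intro q hq
  obtain ⟨_, h1, h2⟩ := hq
  simp only [Set.biInter_singleton] at h1
  simp only [Set.biUnion_singleton] at h2
  exact Set.mem_singleton_iff.2 (subset_antisymm h2 h1).symm ▸ rfl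

lemma self_subset_gam {S : Set (Set (M × M))} (hS : S ⊆ Posets M) : S ⊆ gam S := by
  intro p hp
  exact ⟨hS hp, Set.biInter_subset_of_mem hp, Set.subset_biUnion_of_mem (u := fun p => p) hp⟩

lemma ufg_two_elems [Nonempty M] {S : Set (Set (M × M))} (h : IsUfg S) :
    ∃ p ∈ S, ∃ q ∈ S, p ≠ q := by
  obtain ⟨hP, hss, _⟩ := h
  rcases S.eq_empty_or_nonempty with rfl | ⟨p, hp⟩
  · rw [gam_empty] at hss; exact absurd hss (lt_irrefl _)
  refine ⟨p, hp, ?_⟩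
  by_contra hno
  push_neg at hno
  have hSp : S = {p} := by
    apply subset_antisymm
    · intro q hq; exact Set.mem_singleton_iff.2 (hno q hq).symm
    · intro q hq; rwa [Set.mem_singleton_iff.1 hq]
  rw [hSp] at hss
  exact hss.not_subset (gam_singleton p)

lemma pair_ufg [Nonempty M] {p q : Set (M × M)} (hp : p ∈ Posets M) (hq : q ∈ Posets M)
    (hpq : p ≠ q) (hr : ∃ r, r ∈ gam {p, q} ∧ r ∉ ({p, q} : Set (Set (M × M)))) :
    IsUfg {p, q} := by
  have hsub : ({p, q} : Set (Set (M × M))) ⊆ Posets M := by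
    rintro x (rfl | rfl); exact hp; exact hq
  obtain ⟨r, hrg, hrn⟩ := hr
  refine ⟨hsub, ⟨self_subset_gam hsub, ?_⟩, ?_⟩
  · intro hcon
    exact hrn (hcon hrg)
  · rintro ⟨ℓ, A, hA, hU⟩
    have hrU : r ∈ ⋃ i, gam (A i) := hU ▸ hrg
    obtain ⟨i, hi⟩ := Set.mem_iUnion.1 hrU
    have hAi : gam (A i) ⊆ {p, q} := by
      have hAs := (hA i).1
      have hAne := (hA i).2
      by_cases hpA : p ∈ A i <;> by_cases hqA : q ∈ A i
      · exact absurd (by rintro x (rfl | rfl); exact hpA; exact hqA) hAne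
      · have hsg : A i = {p} := by
          apply subset_antisymm
          · intro x hx; rcases hAs hx with rfl | rfl
            · rfl
            · exact absurd hx hqA
          · intro x hx; rwa [Set.mem_singleton_iff.1 hx]
        rw [hsg]
        exact (gam_singleton p).trans (by intro x hx; exact Or.inl hx)
      · have hsg : A i = {q} := by
          apply subset_antisymm
          · intro x hx; rcases hAs hx with rfl | rfl
            · exact absurd hx hpA
            · rfl
          · intro x hx; rwa [Set.mem_singleton_iff.1 hx]
        rw [hsg]
        exact (gam_singleton q).trans (by intro x hx; exact Or.inr hx)
      · have hsg : A i = ∅ := by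
          apply Set.eq_empty_iff_forall_notMem.2
          intro x hx; rcases hAs hx with rfl | rfl; exact hpA hx; exact hqA hx
        rw [hsg, gam_empty]
        exact Set.empty_subset _
    exact hrn (hAi hi)
lemma exists_cover [Finite M] {p : Set (M × M)} (hp : IsPO p) {a b : M}
    (hab : (a, b) ∈ p) (hne : a ≠ b) :
    ∃ a' b', (a', b') ∈ p ∧ a' ≠ b' ∧
      ∀ c, (a', c) ∈ p → (c, b') ∈ p → c = a' ∨ c = b' := by
  obtain ⟨hrefl, hanti, htrans⟩ := hp
  suffices h : ∀ N : ℕ, ∀ a b : M, (a, b) ∈ p → a ≠ b →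
      ({c | (a, c) ∈ p ∧ (c, b) ∈ p}).ncard ≤ N →
      ∃ a' b', (a', b') ∈ p ∧ a' ≠ b' ∧
        ∀ c, (a', c) ∈ p → (c, b') ∈ p → c = a' ∨ c = b' by
    exact h _ a b hab hne le_rfl
  intro N
  induction N with
  | zero =>
    intro a b hab hne hcard
    exfalso
    have hbmem : b ∈ {c | (a, c) ∈ p ∧ (c, b) ∈ p} := ⟨hab, hrefl b⟩
    have := Set.ncard_pos (Set.toFinite _) |>.2 ⟨b, hbmem⟩
    omega
  | succ N ih =>
    intro a b hab hne hcard
    by_cases hc : ∀ c, (a, c) ∈ p → (c, b) ∈ p → c = a ∨ c = b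
    · exact ⟨a, b, hab, hne, hc⟩
    push_neg at hc
    obtain ⟨c, hac, hcb, hca, hcb'⟩ := hc
    apply ih a c hac (Ne.symm hca)
    have hsub : {d | (a, d) ∈ p ∧ (d, c) ∈ p} ⊆ {c | (a, c) ∈ p ∧ (c, b) ∈ p} \ {b} := by
      rintro d ⟨had, hdc⟩
      refine ⟨⟨had, htrans _ _ _ hdc hcb⟩, ?_⟩
      intro hdb
      rw [Set.mem_singleton_iff] at hdb
      subst hdb
      exact hcb' (hanti _ _ hcb hdc)
    have hble : ({c | (a, c) ∈ p ∧ (c, b) ∈ p} \ {b}).ncard ≤ N := by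
      have hbmem : b ∈ {c | (a, c) ∈ p ∧ (c, b) ∈ p} := ⟨hab, hrefl b⟩
      have := Set.ncard_diff_singleton_lt_of_mem hbmem (Set.toFinite _)
      omega
    exact le_trans (Set.ncard_le_ncard hsub ((Set.toFinite _).diff)) hble

lemma exists_mid_poset [Finite M] {p : Set (M × M)} (hp : IsPO p) {e f : M × M}
    (he : e ∈ p) (hf : f ∈ p) (hee : e.1 ≠ e.2) (hff : f.1 ≠ f.2) (hef : e ≠ f) :
    ∃ q, IsPO q ∧ q ⊆ p ∧ q ≠ p ∧ q ≠ Diag M := by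
  have he' : (e.1, e.2) ∈ p := by rwa [Prod.mk.eta]
  obtain ⟨a, b, hab, hne, hcov⟩ := exists_cover hp he' hee
  obtain ⟨hrefl, hanti, htrans⟩ := hp
  refine ⟨p \ {(a, b)}, ⟨?_, ?_, ?_⟩, Set.diff_subset, ?_, ?_⟩
  · intro x
    refine ⟨hrefl x, ?_⟩
    intro hx
    rw [Set.mem_singleton_iff, Prod.mk.injEq] at hx
    exact hne (hx.1.symm.trans hx.2)
  · intro x y hxy hyx
    exact hanti x y hxy.1 hyx.1
  · intro x y z hxy hyz
    refine ⟨htrans x y z hxy.1 hyz.1, ?_⟩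
    intro hxz
    rw [Set.mem_singleton_iff, Prod.mk.injEq] at hxz
    obtain ⟨rfl, rfl⟩ := hxz
    rcases hcov y hxy.1 hyz.1 with rfl | rfl
    · exact hyz.2 rfl
    · exact hxy.2 rfl
  · intro hq
    have : (a, b) ∈ p \ {(a, b)} := by rw [hq]; exact hab
    exact this.2 rfl
  · -- q ≠ Diag: one of e, f survives
    intro hq
    have key : ∀ g : M × M, g ∈ p → g.1 ≠ g.2 → g = (a, b) := by
      intro g hg hg'
      by_contra hgne
      have : g ∈ p \ {(a, b)} := ⟨hg, by simpa using hgne⟩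
      rw [hq] at this
      exact hg' this
    have h1 := key e he hee
    have h2 := key f hf hff
    exact hef (h1.trans h2.symm)

lemma minimal_ufg {a b : M} (hab : a ≠ b) {S : Set (Set (M × M))}
    (hS : S ⊆ Posets M) (hdS : Diag M ∉ S) (hinter : (⋂ p ∈ S, p) ⊆ Diag M)
    (hmin : ∀ S', S' ⊂ S → ¬ (⋂ p ∈ S', p) ⊆ Diag M) : IsUfg S := by
  have hSne : S.Nonempty := by
    rcases S.eq_empty_or_nonempty with rfl | h
    · exfalso
      have : (a, b) ∈ Diag M := hinter (by simp)
      exact hab this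
    · exact h
  have hdg : Diag M ∈ gam S := by
    refine ⟨diag_isPO, hinter, ?_⟩
    rintro ⟨x, y⟩ (h : x = y)
    subst h
    obtain ⟨q, hq⟩ := hSne
    exact Set.mem_biUnion hq ((hS hq).1 x)
  refine ⟨hS, ⟨self_subset_gam hS, fun hcon => hdS (hcon hdg)⟩, ?_⟩
  rintro ⟨ℓ, A, hA, hU⟩
  have : Diag M ∈ ⋃ i, gam (A i) := hU ▸ hdg
  obtain ⟨i, hi⟩ := Set.mem_iUnion.1 this
  exact hmin (A i) (hA i) hi.2.1

lemma exists_minimal [Finite M] {R : Set (Set (M × M))} (h : (⋂ p ∈ R, p) ⊆ Diag M) :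
    ∃ S, S ⊆ R ∧ (⋂ p ∈ S, p) ⊆ Diag M ∧ ∀ S', S' ⊂ S → ¬ (⋂ p ∈ S', p) ⊆ Diag M := by
  suffices key : ∀ N : ℕ, ∀ R : Set (Set (M × M)), R.ncard ≤ N → (⋂ p ∈ R, p) ⊆ Diag M →
      ∃ S, S ⊆ R ∧ (⋂ p ∈ S, p) ⊆ Diag M ∧ ∀ S', S' ⊂ S → ¬ (⋂ p ∈ S', p) ⊆ Diag M by
    exact key _ R le_rfl h
  intro N
  induction N with
  | zero =>
    intro R hcard hR
    have : R = ∅ := by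
      rw [← Set.ncard_eq_zero (Set.toFinite R)]; omega
    subst this
    refine ⟨∅, le_rfl, hR, ?_⟩
    intro S' hS'
    exact absurd (Set.empty_subset S') hS'.2
  | succ N ih =>
    intro R hcard hR
    by_cases hmin : ∀ S', S' ⊂ R → ¬ (⋂ p ∈ S', p) ⊆ Diag M
    · exact ⟨R, le_rfl, hR, hmin⟩
    push_neg at hmin
    obtain ⟨S', hS'R, hS'⟩ := hmin
    have hlt : S'.ncard < R.ncard := Set.ncard_lt_ncard hS'R (Set.toFinite R)
    obtain ⟨S, h1, h2, h3⟩ := ih S' (by omega) hS'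
    exact ⟨S, h1.trans hS'R.1, h2, h3⟩


/-- The population ufg depth of `p` w.r.t. a probability mass function `ν` on posets. -/
noncomputable def popDepth (ν : Set (M × M) → ℝ) (p : Set (M × M)) : ℝ :=
  if ∀ S : Set (Set (M × M)), IsUfg S → (∏ᶠ q ∈ S, ν q) = 0 then 0
  else (∑ᶠ S ∈ {S : Set (Set (M × M)) | IsUfg S}, ∏ᶠ q ∈ S, ν q)⁻¹ *
       ∑ᶠ S ∈ {S : Set (Set (M × M)) | IsUfg S ∧ p ∈ gam S}, ∏ᶠ q ∈ S, ν q

/-- The empirical measure of a sample of posets. -/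
noncomputable def nuEmp (n : ℕ) (samp : Fin n → Set (M × M)) (q : Set (M × M)) : ℝ :=
  (Finset.univ.filter fun i => samp i = q).card / n

/-- The empirical ufg depth. -/
noncomputable def ufgDepth (n : ℕ) (samp : Fin n → Set (M × M)) (p : Set (M × M)) : ℝ :=
  popDepth (nuEmp n samp) p

lemma nuEmp_nonneg (n : ℕ) (samp : Fin n → Set (M × M)) (q : Set (M × M)) :
    0 ≤ nuEmp n samp q :=
  div_nonneg (Nat.cast_nonneg _) (Nat.cast_nonneg _)

lemma nuEmp_obs {n : ℕ} {samp : Fin n → Set (M × M)} {q : Set (M × M)}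
    (h : nuEmp n samp q ≠ 0) : ∃ i, samp i = q := by
  by_contra hno
  push_neg at hno
  apply h
  unfold nuEmp
  have : (Finset.univ.filter fun i => samp i = q) = ∅ := by
    apply Finset.filter_eq_empty_iff.2
    intro i _
    exact hno i
  rw [this]
  simp

lemma nuEmp_pos {n : ℕ} {samp : Fin n → Set (M × M)} {q : Set (M × M)}
    (hn : 0 < n) (h : ∃ i, samp i = q) : 0 < nuEmp n samp q := by
  obtain ⟨i, hi⟩ := h
  apply div_pos _ (by exact_mod_cast hn)
  have : i ∈ Finset.univ.filter fun j => samp j = q := by simp [hi]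
  have hpos : 0 < (Finset.univ.filter fun j => samp j = q).card :=
    Finset.card_pos.2 ⟨i, this⟩
  exact_mod_cast hpos

lemma finprod_nuEmp_nonneg [Finite M] (n : ℕ) (samp : Fin n → Set (M × M))
    (S : Set (Set (M × M))) : 0 ≤ ∏ᶠ q ∈ S, nuEmp n samp q := by
  rw [finprod_mem_eq_finite_toFinset_prod _ (Set.toFinite S)]
  exact Finset.prod_nonneg fun q _ => nuEmp_nonneg n samp q

lemma finprod_nuEmp_obs [Finite M] {n : ℕ} {samp : Fin n → Set (M × M)}
    {S : Set (Set (M × M))} (h : (∏ᶠ q ∈ S, nuEmp n samp q) ≠ 0) :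
    ∀ q ∈ S, ∃ i, samp i = q := by
  intro q hq
  rw [finprod_mem_eq_finite_toFinset_prod _ (Set.toFinite S)] at h
  apply nuEmp_obs (q := q)
  exact Finset.prod_ne_zero_iff.1 h q ((Set.Finite.mem_toFinset _).2 hq)

lemma finprod_nuEmp_pos [Finite M] {n : ℕ} {samp : Fin n → Set (M × M)}
    {S : Set (Set (M × M))} (hn : 0 < n) (h : ∀ q ∈ S, ∃ i, samp i = q) :
    0 < ∏ᶠ q ∈ S, nuEmp n samp q := by
  rw [finprod_mem_eq_finite_toFinset_prod _ (Set.toFinite S)]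
  exact Finset.prod_pos fun q hq => nuEmp_pos hn (h q ((Set.Finite.mem_toFinset _).1 hq))

theorem stmt14 {M : Type*} [Fintype M] (n : ℕ) (samp : Fin n → Set (M × M))
    (hsamp : ∀ i, samp i ∈ Posets M)
    (hnz : ¬ ∀ p : Set (M × M), ufgDepth n samp p = 0) :
    ufgDepth n samp {z : M × M | z.1 = z.2} = 0 ↔
      ∃ y₁ y₂ : M, y₁ ≠ y₂ ∧ ∀ i, (y₁, y₂) ∈ samp i := by
  have hC : ¬ ∀ S : Set (Set (M × M)), IsUfg S → (∏ᶠ q ∈ S, nuEmp n samp q) = 0 := by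
    intro hC
    apply hnz
    intro p
    unfold ufgDepth popDepth
    rw [if_pos hC]
  have hC' := hC
  push_neg at hC'
  obtain ⟨S0, hS0u, hS0p⟩ := hC'
  have hTpos : 0 < ∑ᶠ S ∈ {S : Set (Set (M × M)) | IsUfg S}, ∏ᶠ q ∈ S, nuEmp n samp q := by
    rw [finsum_mem_eq_finite_toFinset_sum _ (Set.toFinite _)]
    apply Finset.sum_pos' (fun S _ => finprod_nuEmp_nonneg n samp S)
    exact ⟨S0, (Set.Finite.mem_toFinset _).2 hS0u,
      lt_of_le_of_ne (finprod_nuEmp_nonneg n samp S0) (Ne.symm hS0p)⟩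
  have hdepth : ufgDepth n samp {z : M × M | z.1 = z.2} =
      (∑ᶠ S ∈ {S : Set (Set (M × M)) | IsUfg S}, ∏ᶠ q ∈ S, nuEmp n samp q)⁻¹ *
      ∑ᶠ S ∈ {S : Set (Set (M × M)) | IsUfg S ∧ {z : M × M | z.1 = z.2} ∈ gam S},
        ∏ᶠ q ∈ S, nuEmp n samp q := by
    unfold ufgDepth popDepth
    rw [if_neg hC]
  have heq : (ufgDepth n samp {z : M × M | z.1 = z.2} = 0) ↔
      (∑ᶠ S ∈ {S : Set (Set (M × M)) | IsUfg S ∧ {z : M × M | z.1 = z.2} ∈ gam S},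
        ∏ᶠ q ∈ S, nuEmp n samp q) = 0 := by
    rw [hdepth, mul_eq_zero]
    constructor
    · rintro (h | h)
      · exact absurd h (inv_ne_zero hTpos.ne')
      · exact h
    · exact Or.inr
  have hNumzero : (∑ᶠ S ∈ {S : Set (Set (M × M)) | IsUfg S ∧ {z : M × M | z.1 = z.2} ∈ gam S},
        ∏ᶠ q ∈ S, nuEmp n samp q) = 0 ↔
      ∀ S : Set (Set (M × M)), IsUfg S → {z : M × M | z.1 = z.2} ∈ gam S →
        (∏ᶠ q ∈ S, nuEmp n samp q) = 0 := by
    rw [finsum_mem_eq_finite_toFinset_sum _ (Set.toFinite _),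
      Finset.sum_eq_zero_iff_of_nonneg (fun S _ => finprod_nuEmp_nonneg n samp S)]
    constructor
    · intro h S hu hg
      exact h S ((Set.Finite.mem_toFinset _).2 ⟨hu, hg⟩)
    · intro h S hS
      obtain ⟨hu, hg⟩ := (Set.Finite.mem_toFinset _).1 hS
      exact h S hu hg
  rw [heq, hNumzero]
  constructor
  · -- all products zero → common edge
    intro hall
    by_contra hno
    push_neg at hno
    rcases isEmpty_or_nonempty M with hM | hM
    · apply hS0p
      apply hall S0 hS0u
      refine ⟨⟨fun x => (hM.false x).elim, fun x => (hM.false x).elim,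
        fun x => (hM.false x).elim⟩, ?_, ?_⟩
      · rintro ⟨x, y⟩ _; exact (hM.false x).elim
      · rintro ⟨x, y⟩ _; exact (hM.false x).elim
    by_cases hsub : ∀ x y : M, x = y
    · obtain ⟨hP0, hss0, _⟩ := hS0u
      obtain ⟨r, hrg, hrn⟩ := Set.exists_of_ssubset hss0
      apply hrn
      obtain ⟨x0⟩ := hM
      have hr : (x0, x0) ∈ r := hrg.1.1 x0
      have hr2 : (x0, x0) ∈ ⋃ p ∈ S0, p := hrg.2.2 hr
      obtain ⟨q, hqS, hq⟩ := Set.mem_iUnion₂.1 hr2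
      have huniv : ∀ s : Set (M × M), IsPO s → s = Set.univ := by
        intro s hs
        apply Set.eq_univ_iff_forall.2
        rintro ⟨x, y⟩
        have hxy : x = y := hsub x y
        subst hxy
        exact hs.1 x
      rw [huniv r hrg.1, ← huniv q (hP0 hqS)]
      exact hqS
    push_neg at hsub
    obtain ⟨a, b, hab⟩ := hsub
    have hS0ne : S0.Nonempty := by
      rcases S0.eq_empty_or_nonempty with rfl | h
      · exact absurd (gam_empty (M := M) ▸ hS0u.2.1) (lt_irrefl _)
      · exact h
    have hobs0 := finprod_nuEmp_obs hS0p
    have hn : 0 < n := by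
      obtain ⟨q, hq⟩ := hS0ne
      obtain ⟨i, _⟩ := hobs0 q hq
      exact i.pos
    have conclude : ∀ S : Set (Set (M × M)), IsUfg S → (⋂ p ∈ S, p) ⊆ Diag M →
        (∀ q ∈ S, ∃ i, samp i = q) → False := by
      intro S hu hint hobs
      have hSne : S.Nonempty := by
        obtain ⟨p, hp, _, _, _⟩ := ufg_two_elems hu
        exact ⟨p, hp⟩
      have hg : {z : M × M | z.1 = z.2} ∈ gam S := by
        refine ⟨diag_isPO, hint, ?_⟩
        rintro ⟨x, y⟩ (h : x = y)
        subst h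
        obtain ⟨q, hq⟩ := hSne
        exact Set.mem_biUnion hq ((hu.1 hq).1 x)
      exact (ne_of_gt (finprod_nuEmp_pos hn hobs)) (hall S hu hg)
    by_cases hcase : (⋂ p ∈ {q : Set (M × M) | (∃ i, samp i = q) ∧ q ≠ Diag M}, p) ⊆ Diag M
    · obtain ⟨S, hSR, hSint, hSmin⟩ := exists_minimal hcase
      apply conclude S ?_ hSint (fun q hq => (hSR hq).1)
      apply minimal_ufg hab ?_ ?_ hSint hSmin
      · intro q hq
        obtain ⟨i, rfl⟩ := (hSR hq).1
        exact hsamp i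
      · intro hd
        exact (hSR hd).2 rfl
    · obtain ⟨z, hzint, hzd⟩ := Set.not_subset.1 hcase
      have hzd' : z.1 ≠ z.2 := hzd
      obtain ⟨i0, hi0⟩ := hno z.1 z.2 hzd'
      rw [Prod.mk.eta] at hi0
      have hdobs : samp i0 = Diag M := by
        by_contra hne'
        have hmem : samp i0 ∈ {q : Set (M × M) | (∃ i, samp i = q) ∧ q ≠ Diag M} :=
          ⟨⟨i0, rfl⟩, hne'⟩
        exact hi0 (Set.mem_iInter₂.1 hzint (samp i0) hmem)
      by_cases hbig : ∃ q : Set (M × M), (∃ i, samp i = q) ∧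
          ∃ e ∈ q, ∃ f ∈ q, e.1 ≠ e.2 ∧ f.1 ≠ f.2 ∧ e ≠ f
      · obtain ⟨q, hqobs, e, he, f, hf, hee, hff, hef⟩ := hbig
        have hqPO : IsPO q := by
          obtain ⟨i, rfl⟩ := hqobs; exact hsamp i
        obtain ⟨r, hrPO, hrq, hrne, hrd⟩ := exists_mid_poset hqPO he hf hee hff hef
        have hqd : q ≠ Diag M := by
          intro h
          apply hee
          have : e ∈ Diag M := h ▸ he
          exact this
        apply conclude {Diag M, q} ?_ ?_ ?_
        · apply pair_ufg diag_isPO hqPO (Ne.symm hqd)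
          refine ⟨r, ⟨hrPO, ?_, ?_⟩, ?_⟩
          · rw [Set.biInter_pair]
            exact Set.inter_subset_left.trans (diag_subset hrPO)
          · rw [Set.biUnion_pair]
            exact hrq.trans Set.subset_union_right
          · intro hrmem
            rcases hrmem with h | h
            · exact hrd h
            · exact hrne (Set.mem_singleton_iff.1 h)
        · rw [Set.biInter_pair]
          exact Set.inter_subset_left
        · rintro s (rfl | rfl)
          · exact ⟨i0, hdobs⟩
          · exact hqobs
      · push_neg at hbig
        apply conclude S0 hS0u ?_ hobs0
        intro z' hz'
        by_contra hz'd
        have hz'd' : z'.1 ≠ z'.2 := hz'd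
        have hz'mem : ∀ s ∈ S0, z' ∈ s := fun s hs => Set.mem_iInter₂.1 hz' s hs
        obtain ⟨p, hp, q, hq, hpq⟩ := ufg_two_elems hS0u
        have key : ∀ s, s ∈ S0 → s = Diag M ∪ {z'} := by
          intro s hs
          have hsobs := hobs0 s hs
          have hsPO : IsPO s := by
            obtain ⟨i, rfl⟩ := hsobs; exact hsamp i
          apply subset_antisymm
          · intro w hw
            by_cases hwd : w.1 = w.2
            · exact Or.inl hwd
            · exact Or.inr (hbig s hsobs w hw z' (hz'mem s hs) hwd hz'd')
          · rintro w (hw | hw)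
            · exact diag_subset hsPO hw
            · rw [Set.mem_singleton_iff] at hw
              subst hw
              exact hz'mem s hs
        exact hpq ((key p hp).trans (key q hq).symm)
  · rintro ⟨y₁, y₂, hy, hcom⟩ S hu hg
    by_contra hprod
    have hobs := finprod_nuEmp_obs hprod
    have hmem : (y₁, y₂) ∈ ⋂ p ∈ S, p := by
      apply Set.mem_biInter
      intro q hq
      obtain ⟨i, rfl⟩ := hobs q hq
      exact hcom i
    exact hy (hg.2.1 hmem)
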